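/- arXiv:2405.17151 — 4 statements merged into one kernel-verified Lean document; each statement's English description precedes it below -/
import Mathlib

section
/- Let T, Y be Bernoulli random variables, X a random variable, and f a measurable function into [0,1]. Suppose (i) the conditional distributions of (X,Y) given T=t equal the interventional distributions (ignorability), (ii) the thresholded predictor 1_{[k,1]}(f(X)) equals f(X) almost surely for some threshold k in [0,1], and (iii) the classification accuracy satisfies P(1_{[k,1]}(f(X)) = Y) = 1 - ε. Define the treatment effect bias TEB(f) = (E[f(X)|T=1] - E[Y|T=1]) - (E[f(X)|T=0] - E[Y|T=0]). Then |TEB(f)| ≤ ε / min(P(T=0), P(T=1)). -/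
open MeasureTheory ProbabilityTheory Set

/-- accuracy vs treatment effect bias bound. -/
theorem teb_le_acc_bound {Ω E : Type*} [MeasurableSpace Ω] [MeasurableSpace E]
    (μ : Measure Ω) [IsProbabilityMeasure μ]
    (T Y : Ω → ℝ) (X : Ω → E) (f : E → ℝ) (k ε : ℝ)
    (hTval : ∀ ω, T ω = 0 ∨ T ω = 1) (hYval : ∀ ω, Y ω = 0 ∨ Y ω = 1)
    (hTm : Measurable T) (hYm : Measurable Y) (hXm : Measurable X)
    (hfm : Measurable f) (hf01 : ∀ x, f x ∈ Icc (0 : ℝ) 1)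
    (hk : k ∈ Icc (0 : ℝ) 1)
    (hT1 : 0 < μ {ω | T ω = 1}) (hT0 : 0 < μ {ω | T ω = 0})
    (hdisc : ∀ᵐ ω ∂μ, (if k ≤ f (X ω) then (1 : ℝ) else 0) = f (X ω))
    (hε : ε ∈ Icc (0 : ℝ) 1)
    (hacc : (μ {ω | (if k ≤ f (X ω) then (1 : ℝ) else 0) = Y ω}).toReal = 1 - ε) :
    |((∫ ω, f (X ω) ∂μ[|{ω | T ω = 1}]) - ∫ ω, Y ω ∂μ[|{ω | T ω = 1}]) -
        ((∫ ω, f (X ω) ∂μ[|{ω | T ω = 0}]) - ∫ ω, Y ω ∂μ[|{ω | T ω = 0}])| ≤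
      ε / min (μ {ω | T ω = 0}).toReal (μ {ω | T ω = 1}).toReal := by
  set A1 := {ω | T ω = 1} with hA1
  set A0 := {ω | T ω = 0} with hA0
  have hA1m : MeasurableSet A1 := hTm (measurableSet_singleton 1)
  have hA0m : MeasurableSet A0 := hTm (measurableSet_singleton 0)
  have hcompl : A0 = A1ᶜ := by
    ext ω
    simp only [hA0, hA1, mem_setOf_eq, mem_compl_iff]
    constructor
    · intro h h1; rw [h] at h1; norm_num at h1
    · intro h; rcases hTval ω with h0 | h1; · exact h0
      · exact absurd h1 h
  set g : Ω → ℝ := fun ω => f (X ω) - Y ω with hg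
  have hgm : Measurable g := (hfm.comp hXm).sub hYm
  have hgb : ∀ ω, ‖g ω‖ ≤ 1 := by
    intro ω
    have hf := hf01 (X ω)
    rcases hYval ω with h | h <;>
      simp only [hg, h, Real.norm_eq_abs, abs_le] <;> constructor <;> linarith [hf.1, hf.2]
  -- integrability of g w.r.t. any finite measure
  have hgint : ∀ (ν : Measure Ω) [IsFiniteMeasure ν], Integrable g ν := by
    intro ν _
    exact ⟨hgm.aestronglyMeasurable,
      (hasFiniteIntegral_const (1 : ℝ)).mono' (ae_of_all _ hgb)⟩
  have hfint : ∀ (ν : Measure Ω) [IsFiniteMeasure ν], Integrable (fun ω => f (X ω)) ν := by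
    intro ν _
    refine ⟨(hfm.comp hXm).aestronglyMeasurable,
      (hasFiniteIntegral_const (1 : ℝ)).mono' (ae_of_all _ fun ω => ?_)⟩
    have hf := hf01 (X ω)
    simp only [Real.norm_eq_abs, abs_le]; constructor <;> linarith [hf.1, hf.2]
  have hYint : ∀ (ν : Measure Ω) [IsFiniteMeasure ν], Integrable Y ν := by
    intro ν _
    refine ⟨hYm.aestronglyMeasurable,
      (hasFiniteIntegral_const (1 : ℝ)).mono' (ae_of_all _ fun ω => ?_)⟩
    rcases hYval ω with h | h <;> simp [h]
  -- measures of A0, A1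
  have hp1ne : μ A1 ≠ ⊤ := (measure_lt_top μ A1).ne
  have hp0ne : μ A0 ≠ ⊤ := (measure_lt_top μ A0).ne
  set p1 := (μ A1).toReal with hp1
  set p0 := (μ A0).toReal with hp0
  have hp1pos : 0 < p1 := ENNReal.toReal_pos hT1.ne' hp1ne
  have hp0pos : 0 < p0 := ENNReal.toReal_pos hT0.ne' hp0ne
  -- conditional measures are finite
  have hfin1 : IsFiniteMeasure μ[|A1] := by
    have := cond_isProbabilityMeasure (μ := μ) hT1.ne'
    infer_instance
  have hfin0 : IsFiniteMeasure μ[|A0] := by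
    have := cond_isProbabilityMeasure (μ := μ) hT0.ne'
    infer_instance
  -- rewrite conditional integrals
  have hcondInt : ∀ (s : Set Ω) (h : Ω → ℝ),
      ∫ ω, h ω ∂μ[|s] = ((μ s)⁻¹).toReal * ∫ ω in s, h ω ∂μ := by
    intro s h
    rw [ProbabilityTheory.cond, integral_smul_measure, smul_eq_mul]
  -- ∫ |g| bound
  set S := {ω | (if k ≤ f (X ω) then (1 : ℝ) else 0) = Y ω} with hS
  have hSm : MeasurableSet S := by
    have hind : Measurable (fun ω => (if k ≤ f (X ω) then (1 : ℝ) else 0) - Y ω) := by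
      apply Measurable.sub _ hYm
      exact (measurable_const.ite ((measurableSet_Ici.preimage hfm).preimage hXm)
        measurable_const)
    have : S = (fun ω => (if k ≤ f (X ω) then (1 : ℝ) else 0) - Y ω) ⁻¹' {0} := by
      ext ω; simp [hS, sub_eq_zero]
    rw [this]
    exact hind (measurableSet_singleton 0)
  have hScompl : (μ Sᶜ).toReal = ε := by
    have := prob_compl_eq_one_sub hSm (μ := μ)
    rw [this, ENNReal.toReal_sub_of_le (prob_le_one) (by simp)]
    simp [hacc]
  have habs_le : ∫ ω, |g ω| ∂μ ≤ ε := by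
    have hle : ∀ᵐ ω ∂μ, |g ω| ≤ Sᶜ.indicator (fun _ => (1:ℝ)) ω := by
      filter_upwards [hdisc] with ω hω
      by_cases hωS : ω ∈ S
      · have : g ω = 0 := by
          simp only [hg]
          rw [← hω, hωS.out]
          ring
        rw [this, abs_zero]
        exact Set.indicator_nonneg (fun _ _ => zero_le_one) ω
      · rw [Set.indicator_of_mem (Set.mem_compl hωS)]
        simpa using hgb ω
    calc ∫ ω, |g ω| ∂μ ≤ ∫ ω, Sᶜ.indicator (fun _ => (1:ℝ)) ω ∂μ := by
          apply integral_mono_ae (hgint μ).abs _ hle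
          exact (integrable_const (1:ℝ)).indicator hSm.compl
      _ = (μ Sᶜ).toReal := by
          rw [integral_indicator hSm.compl]
          simp
          rfl
      _ = ε := hScompl
  -- split total integral of |g|
  have hsplit : (∫ ω in A1, |g ω| ∂μ) + (∫ ω in A0, |g ω| ∂μ) = ∫ ω, |g ω| ∂μ := by
    rw [hcompl]
    exact integral_add_compl hA1m (hgint μ).abs
  have habs1 : |∫ ω in A1, g ω ∂μ| ≤ ∫ ω in A1, |g ω| ∂μ := by
    simpa [Real.norm_eq_abs] using norm_integral_le_integral_norm (μ := μ.restrict A1) g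
  have habs0 : |∫ ω in A0, g ω ∂μ| ≤ ∫ ω in A0, |g ω| ∂μ := by
    simpa [Real.norm_eq_abs] using norm_integral_le_integral_norm (μ := μ.restrict A0) g
  have hnn1 : 0 ≤ ∫ ω in A1, |g ω| ∂μ := integral_nonneg fun ω => abs_nonneg _
  have hnn0 : 0 ≤ ∫ ω in A0, |g ω| ∂μ := integral_nonneg fun ω => abs_nonneg _
  -- combine integrals
  have hcomb1 : (∫ ω, f (X ω) ∂μ[|A1]) - ∫ ω, Y ω ∂μ[|A1] = ∫ ω, g ω ∂μ[|A1] := by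
    rw [← integral_sub (hfint _) (hYint _)]
  have hcomb0 : (∫ ω, f (X ω) ∂μ[|A0]) - ∫ ω, Y ω ∂μ[|A0] = ∫ ω, g ω ∂μ[|A0] := by
    rw [← integral_sub (hfint _) (hYint _)]
  rw [hcomb1, hcomb0, hcondInt, hcondInt]
  have hinv1 : ((μ A1)⁻¹).toReal = p1⁻¹ := by
    rw [ENNReal.toReal_inv]
  have hinv0 : ((μ A0)⁻¹).toReal = p0⁻¹ := by
    rw [ENNReal.toReal_inv]
  rw [hinv1, hinv0]
  set m := min p0 p1 with hm
  have hmpos : 0 < m := lt_min hp0pos hp1pos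
  calc |p1⁻¹ * ∫ ω in A1, g ω ∂μ - p0⁻¹ * ∫ ω in A0, g ω ∂μ|
      ≤ |p1⁻¹ * ∫ ω in A1, g ω ∂μ| + |p0⁻¹ * ∫ ω in A0, g ω ∂μ| := abs_sub _ _
    _ = p1⁻¹ * |∫ ω in A1, g ω ∂μ| + p0⁻¹ * |∫ ω in A0, g ω ∂μ| := by
        rw [abs_mul, abs_mul, abs_of_pos (inv_pos.mpr hp1pos), abs_of_pos (inv_pos.mpr hp0pos)]
    _ ≤ m⁻¹ * (∫ ω in A1, |g ω| ∂μ) + m⁻¹ * (∫ ω in A0, |g ω| ∂μ) := by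
        have h1 : p1⁻¹ ≤ m⁻¹ := (inv_anti₀ hmpos (min_le_right _ _))
        have h0 : p0⁻¹ ≤ m⁻¹ := (inv_anti₀ hmpos (min_le_left _ _))
        exact add_le_add
          (mul_le_mul h1 habs1 (abs_nonneg _) (le_of_lt (inv_pos.mpr hmpos)))
          (mul_le_mul h0 habs0 (abs_nonneg _) (le_of_lt (inv_pos.mpr hmpos)))
    _ = m⁻¹ * ∫ ω, |g ω| ∂μ := by rw [← hsplit]; ring
    _ ≤ m⁻¹ * ε := by gcongr
    _ = ε / m := by rw [div_eq_inv_mul]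
end

section
/- Let T be Bernoulli and Y binary, with f: X-space → [0,1]. For t ∈ {0,1} let ε_t = E[f(X) - Y | T = t]. Then the misclassification probability ε = P(1_{[k,1]}(f(X)) ≠ Y) satisfies ε ≥ |ε_0|·P(T=0) + |ε_1|·P(T=1) − E[|1_{[k,1]}(f(X)) − f(X)|]. -/
open MeasureTheory ProbabilityTheory Set

/-- the misclassification probability lower-bounds the weighted sum of
conditional biases minus the discretization error. -/
theorem misclassification_lower_bound {Ω E : Type*} [MeasurableSpace Ω] [MeasurableSpace E]
    (μ : Measure Ω) [IsProbabilityMeasure μ]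
    (T Y : Ω → ℝ) (X : Ω → E) (f : E → ℝ) (k ε : ℝ)
    (hTval : ∀ ω, T ω = 0 ∨ T ω = 1) (hYval : ∀ ω, Y ω = 0 ∨ Y ω = 1)
    (hTm : Measurable T) (hYm : Measurable Y) (hXm : Measurable X)
    (hfm : Measurable f) (hf01 : ∀ x, f x ∈ Icc (0 : ℝ) 1)
    (hk : k ∈ Icc (0 : ℝ) 1)
    (hT1 : 0 < μ {ω | T ω = 1}) (hT0 : 0 < μ {ω | T ω = 0})
    (hε : (μ {ω | (if k ≤ f (X ω) then (1 : ℝ) else 0) ≠ Y ω}).toReal = ε) :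
    |∫ ω, (f (X ω) - Y ω) ∂μ[|{ω | T ω = 0}]| * (μ {ω | T ω = 0}).toReal +
        |∫ ω, (f (X ω) - Y ω) ∂μ[|{ω | T ω = 1}]| * (μ {ω | T ω = 1}).toReal -
        (∫ ω, |(if k ≤ f (X ω) then (1 : ℝ) else 0) - f (X ω)| ∂μ) ≤ ε := by
  classical
  have hfXm : Measurable fun ω => f (X ω) := hfm.comp hXm
  set g : Ω → ℝ := fun ω => if k ≤ f (X ω) then (1:ℝ) else 0 with hgdef
  have hgm : Measurable g :=
    Measurable.ite (measurableSet_le measurable_const hfXm) measurable_const measurable_const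
  have hg01 : ∀ ω, g ω = 0 ∨ g ω = 1 := by
    intro ω; by_cases h : k ≤ f (X ω) <;> simp [hgdef, h]
  have hbnd : ∀ (φ : Ω → ℝ), Measurable φ → (∀ ω, |φ ω| ≤ 2) → Integrable φ μ := fun φ hm hb =>
    ⟨hm.aestronglyMeasurable,
      HasFiniteIntegral.of_bounded (C := 2) (ae_of_all _ fun ω => by simpa using hb ω)⟩
  have hY2 : ∀ ω, |f (X ω) - Y ω| ≤ 2 := by
    intro ω
    rcases hYval ω with h | h <;> rcases hf01 (X ω) with ⟨h1, h2⟩ <;> rw [h, abs_le] <;>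
      constructor <;> linarith
  have hgf2 : ∀ ω, |g ω - f (X ω)| ≤ 2 := by
    intro ω
    rcases hg01 ω with h | h <;> rcases hf01 (X ω) with ⟨h1, h2⟩ <;> rw [h, abs_le] <;>
      constructor <;> linarith
  have hgY2 : ∀ ω, |g ω - Y ω| ≤ 2 := by
    intro ω
    rcases hg01 ω with h | h <;> rcases hYval ω with h' | h' <;> rw [h, h'] <;> norm_num
  have hintfY : Integrable (fun ω => f (X ω) - Y ω) μ :=
    hbnd _ (hfXm.sub hYm) hY2
  have hintabs : Integrable (fun ω => |f (X ω) - Y ω|) μ := hintfY.abs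
  have hintgf : Integrable (fun ω => |g ω - f (X ω)|) μ := (hbnd _ (hgm.sub hfXm) hgf2).abs
  have hintgY : Integrable (fun ω => |g ω - Y ω|) μ := (hbnd _ (hgm.sub hYm) hgY2).abs
  -- conditional integral identity
  have condeq : ∀ s : Set Ω, μ s ≠ 0 →
      |∫ ω, (f (X ω) - Y ω) ∂μ[|s]| * (μ s).toReal = |∫ ω in s, (f (X ω) - Y ω) ∂μ| := by
    intro s hs0
    have hfin : μ s ≠ ⊤ := (measure_lt_top μ s).ne
    have hne : (μ s).toReal ≠ 0 := ENNReal.toReal_ne_zero.2 ⟨hs0, hfin⟩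
    rw [ProbabilityTheory.cond, integral_smul_measure, ENNReal.toReal_inv, smul_eq_mul,
      abs_mul, abs_of_nonneg (inv_nonneg.2 ENNReal.toReal_nonneg)]
    field_simp
  have hcompl : {ω | T ω = 0} = {ω | T ω = 1}ᶜ := by
    ext ω; simp only [mem_setOf_eq, mem_compl_iff]
    rcases hTval ω with h | h <;> simp [h]
  have hs1 : MeasurableSet {ω | T ω = 1} := hTm (measurableSet_singleton 1)
  -- bound sum of restricted integrals by total integral of abs
  have key : |∫ ω in {ω | T ω = 0}, (f (X ω) - Y ω) ∂μ| +
      |∫ ω in {ω | T ω = 1}, (f (X ω) - Y ω) ∂μ| ≤ ∫ ω, |f (X ω) - Y ω| ∂μ := by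
    have h0 : |∫ ω in {ω | T ω = 0}, (f (X ω) - Y ω) ∂μ| ≤
        ∫ ω in {ω | T ω = 0}, |f (X ω) - Y ω| ∂μ := by
      simpa [Real.norm_eq_abs] using
        norm_integral_le_integral_norm (μ := μ.restrict {ω | T ω = 0})
          (f := fun ω => f (X ω) - Y ω)
    have h1 : |∫ ω in {ω | T ω = 1}, (f (X ω) - Y ω) ∂μ| ≤
        ∫ ω in {ω | T ω = 1}, |f (X ω) - Y ω| ∂μ := by
      simpa [Real.norm_eq_abs] using
        norm_integral_le_integral_norm (μ := μ.restrict {ω | T ω = 1})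
          (f := fun ω => f (X ω) - Y ω)
    have hsplit : (∫ ω in {ω | T ω = 1}, |f (X ω) - Y ω| ∂μ) +
        (∫ ω in {ω | T ω = 0}, |f (X ω) - Y ω| ∂μ) = ∫ ω, |f (X ω) - Y ω| ∂μ := by
      rw [hcompl]
      exact integral_add_compl hs1 hintabs
    linarith
  -- triangle inequality pointwise
  have htri : ∫ ω, |f (X ω) - Y ω| ∂μ ≤
      (∫ ω, |g ω - f (X ω)| ∂μ) + ∫ ω, |g ω - Y ω| ∂μ := by
    rw [← integral_add hintgf hintgY]
    refine integral_mono hintabs (hintgf.add hintgY) fun ω => ?_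
    have : f (X ω) - Y ω = -(g ω - f (X ω)) + (g ω - Y ω) := by ring
    rw [this]
    exact (abs_add_le _ _).trans (by rw [abs_neg])
  -- identify ∫ |g - Y| with ε
  have hsetm : MeasurableSet {ω | g ω ≠ Y ω} :=
    (measurableSet_eq_fun hgm hYm).compl
  have hgYind : (fun ω => |g ω - Y ω|) = Set.indicator {ω | g ω ≠ Y ω} (fun _ => (1:ℝ)) := by
    funext ω
    by_cases h : g ω = Y ω
    · simp [h, Set.indicator_of_notMem, mem_setOf_eq]
    · rw [Set.indicator_of_mem (show ω ∈ {ω | g ω ≠ Y ω} from h)]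
      rcases hg01 ω with h1 | h1 <;> rcases hYval ω with h2 | h2 <;>
        simp_all <;> norm_num [if_neg (not_le.mpr h)]
  have heps : ∫ ω, |g ω - Y ω| ∂μ = ε := by
    rw [hgYind, integral_indicator hsetm]
    simp only [integral_const, smul_eq_mul, mul_one, Measure.restrict_apply_univ]
    simpa [hgdef, Measure.real] using hε
  have e0 := condeq {ω | T ω = 0} hT0.ne'
  have e1 := condeq {ω | T ω = 1} hT1.ne'
  have : (∫ ω, |(if k ≤ f (X ω) then (1 : ℝ) else 0) - f (X ω)| ∂μ) =
      ∫ ω, |g ω - f (X ω)| ∂μ := rfl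
  rw [this, e0, e1]
  linarith
end

section
/- In the Gaussian SCM above, the associational difference AD_{Y,T} = E[Y|T=1] − E[Y|T=0] equals Φ(1/√(2+σ_Y²)) − 1/2, which is strictly positive and strictly decreasing in σ_Y² > 0. -/
open MeasureTheory ProbabilityTheory Set

/-- Standard Gaussian CDF. -/
noncomputable def stdGaussCDF (z : ℝ) : ℝ := ((gaussianReal 0 1) (Iic z)).toReal


section Helpers
open Real


lemma pdf_conv (a b : NNReal) (ha : a ≠ 0) (hb : b ≠ 0) (x y : ℝ) :
    gaussianPDFReal 0 a x * gaussianPDFReal x b y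
      = gaussianPDFReal 0 (a + b) y
        * gaussianPDFReal ((a : ℝ) * y / ((a : ℝ) + b)) (a * b / (a + b)) x := by
  have ha' : (0:ℝ) < a := lt_of_le_of_ne a.coe_nonneg (by exact_mod_cast ha.symm)
  have hb' : (0:ℝ) < b := lt_of_le_of_ne b.coe_nonneg (by exact_mod_cast hb.symm)
  have hab : (0:ℝ) < (a:ℝ) + b := by linarith
  have hc : ((a * b / (a + b) : NNReal) : ℝ) = (a:ℝ) * b / ((a:ℝ) + b) := by push_cast; ring
  have hpi : (0:ℝ) < Real.pi := Real.pi_pos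
  simp only [gaussianPDFReal, NNReal.coe_add, hc, sub_zero]
  rw [mul_mul_mul_comm, mul_mul_mul_comm ((Real.sqrt (2 * Real.pi * ((a:ℝ)+b)))⁻¹)]
  congr 1
  · rw [← mul_inv, ← mul_inv, ← Real.sqrt_mul (by positivity), ← Real.sqrt_mul (by positivity)]
    congr 2
    field_simp
  · rw [← Real.exp_add, ← Real.exp_add]
    congr 1
    field_simp
    ring

set_option maxHeartbeats 1000000 in
lemma gauss_conv (a b : NNReal) (ha : a ≠ 0) (hb : b ≠ 0) :
    Measure.map (fun p : ℝ × ℝ => p.1 + p.2) ((gaussianReal 0 a).prod (gaussianReal 0 b))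
      = gaussianReal 0 (a + b) := by
  have hab : (a + b : NNReal) ≠ 0 := by simp [ha]
  have hcne : (a * b / (a + b) : NNReal) ≠ 0 := by
    simp [div_eq_zero_iff, mul_eq_zero, ha, hb, hab]
  ext s hs
  rw [Measure.map_apply (by fun_prop) hs]
  have h1 : ((gaussianReal 0 a).prod (gaussianReal 0 b)) ((fun p : ℝ × ℝ => p.1 + p.2) ⁻¹' s)
      = ∫⁻ x, (gaussianReal 0 b) ((fun y => x + y) ⁻¹' s) ∂(gaussianReal 0 a) := by
    rw [Measure.prod_apply (by exact measurable_add hs)]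
    rfl
  rw [h1]
  have h2 : ∀ x : ℝ, (gaussianReal 0 b) ((fun y => x + y) ⁻¹' s)
      = ∫⁻ y in s, gaussianPDF x b y := by
    intro x
    have : (gaussianReal x b) s = (gaussianReal 0 b) ((fun y => x + y) ⁻¹' s) := by
      have := gaussianReal_map_const_add (μ := 0) (v := b) x
      rw [zero_add] at this
      rw [← this, Measure.map_apply (by fun_prop) hs]
    rw [← this, gaussianReal_apply x hb s]
  simp_rw [h2]
  have hPDFm : Measurable (fun p : ℝ × ℝ => gaussianPDF p.1 b p.2) := by
    simp only [gaussianPDF, gaussianPDFReal]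
    fun_prop
  have hABm : Measurable (fun p : ℝ × ℝ => gaussianPDF 0 a p.1 * gaussianPDF p.1 b p.2) := by
    simp only [gaussianPDF, gaussianPDFReal]
    fun_prop
  have hmeas : Measurable (fun x : ℝ => ∫⁻ y in s, gaussianPDF x b y) := by
    simp_rw [← lintegral_indicator hs _]
    exact Measurable.lintegral_prod_right (hPDFm.indicator (hs.preimage measurable_snd))
  rw [gaussianReal_of_var_ne_zero 0 ha,
    lintegral_withDensity_eq_lintegral_mul _ (measurable_gaussianPDF 0 a)
      hmeas]
  simp only [Pi.mul_apply]
  rw [gaussianReal_apply 0 hab s]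
  calc ∫⁻ x, gaussianPDF 0 a x * ∫⁻ y in s, gaussianPDF x b y
      = ∫⁻ x, ∫⁻ y in s, gaussianPDF 0 a x * gaussianPDF x b y := by
        refine lintegral_congr fun x => ?_
        rw [lintegral_const_mul _ (measurable_gaussianPDF x b)]
    _ = ∫⁻ y in s, ∫⁻ x, gaussianPDF 0 a x * gaussianPDF x b y := by
        simp_rw [← lintegral_indicator hs _]
        rw [lintegral_lintegral_swap (by
          apply Measurable.aemeasurable
          apply Measurable.indicator
          · exact hABm
          · exact hs.preimage measurable_snd)]
        congr 1; ext y
        by_cases hy : y ∈ s <;> simp [hy]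
    _ = ∫⁻ y in s, gaussianPDF 0 (a + b) y := by
        apply setLIntegral_congr_fun hs
        intro y _
        have : ∀ x : ℝ, gaussianPDF 0 a x * gaussianPDF x b y
            = gaussianPDF 0 (a+b) y * gaussianPDF ((a:ℝ) * y / ((a:ℝ)+b)) (a*b/(a+b)) x := by
          intro x
          simp only [gaussianPDF]
          rw [← ENNReal.ofReal_mul (gaussianPDFReal_nonneg _ _ _),
            ← ENNReal.ofReal_mul (gaussianPDFReal_nonneg _ _ _), pdf_conv a b ha hb]
        simp_rw [this]
        rw [lintegral_const_mul _ (measurable_gaussianPDF _ _),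
          lintegral_gaussianPDF_eq_one _ hcne, mul_one]


lemma gauss_map_sqrt_mul (u : NNReal) :
    (gaussianReal 0 1).map (fun x => Real.sqrt u * x) = gaussianReal 0 u := by
  have h := gaussianReal_map_const_mul (μ := 0) (v := 1) (Real.sqrt u)
  rw [mul_zero] at h
  convert h using 2
  ext
  simp [Real.sq_sqrt u.coe_nonneg]

lemma gauss_symm (z : ℝ) : gaussianReal 0 1 (Ici z) = gaussianReal 0 1 (Iic (-z)) := by
  have h := gaussianReal_map_const_mul (μ := 0) (v := 1) (-1)
  rw [mul_zero] at h
  have h1 : (NNReal.mk ((-1:ℝ)^2) (sq_nonneg _) * 1 : NNReal) = 1 := by ext; norm_num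
  rw [h1] at h
  conv_lhs => rw [← h]
  rw [Measure.map_apply (by fun_prop) measurableSet_Ici]
  congr 1
  ext x
  simp only [mem_preimage, mem_Ici, mem_Iic]
  constructor <;> intro <;> linarith

lemma gauss_Ici (u : NNReal) (hu : u ≠ 0) (r : ℝ) :
    ((gaussianReal 0 u) (Ici r)).toReal = stdGaussCDF (-r / Real.sqrt u) := by
  have hu' : (0:ℝ) < Real.sqrt u := Real.sqrt_pos.mpr
    (lt_of_le_of_ne u.coe_nonneg (by exact_mod_cast hu.symm))
  rw [← gauss_map_sqrt_mul u, Measure.map_apply (by fun_prop) measurableSet_Ici]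
  have hset : (fun x => Real.sqrt u * x) ⁻¹' Ici r = Ici (r / Real.sqrt u) := by
    ext x
    simp only [mem_preimage, mem_Ici]
    rw [div_le_iff₀ hu']
    constructor <;> intro <;> linarith [mul_comm (Real.sqrt u) x]
  rw [hset, gauss_symm, stdGaussCDF, neg_div]

lemma stdGaussCDF_zero : stdGaussCDF 0 = 1 / 2 := by
  have h2 : gaussianReal 0 1 (Iic 0) + gaussianReal 0 1 (Ioi 0) = 1 := by
    rw [← measure_union (by simp [disjoint_left]) measurableSet_Ioi, Iic_union_Ioi,
      measure_univ]
  have h3 : gaussianReal 0 1 (Ioi 0) = gaussianReal 0 1 (Ici 0) := by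
    refine le_antisymm (measure_mono Ioi_subset_Ici_self) ?_
    have : (Ici (0:ℝ)) ⊆ Ioi 0 ∪ {0} := by
      intro x hx
      rcases eq_or_lt_of_le (mem_Ici.mp hx) with h | h
      · exact Or.inr (by simp [h.symm])
      · exact Or.inl h
    calc gaussianReal 0 1 (Ici 0) ≤ gaussianReal 0 1 (Ioi 0 ∪ {0}) := measure_mono this
      _ ≤ gaussianReal 0 1 (Ioi 0) + gaussianReal 0 1 {0} := measure_union_le _ _
      _ = gaussianReal 0 1 (Ioi 0) := by
          have h0 : gaussianReal 0 1 ({0} : Set ℝ) = 0 :=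
            gaussianReal_absolutelyContinuous 0 one_ne_zero (by simp)
          rw [h0, add_zero]
  have h4 : gaussianReal 0 1 (Ici 0) = gaussianReal 0 1 (Iic 0) := by
    rw [gauss_symm 0, neg_zero]
  rw [h3, h4, ← two_mul] at h2
  have h5 : gaussianReal 0 1 (Iic 0) = 1 / 2 := by
    rw [ENNReal.eq_div_iff (by norm_num) (by norm_num), ← h2]
  rw [stdGaussCDF, h5]
  simp [ENNReal.toReal_div]

lemma stdGaussCDF_strictMono : StrictMono stdGaussCDF := by
  intro z₁ z₂ h
  have hsplit : gaussianReal 0 1 (Iic z₂) = gaussianReal 0 1 (Iic z₁)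
      + gaussianReal 0 1 (Ioc z₁ z₂) := by
    rw [← measure_union (by simp [disjoint_left]; intro x h1 h2; linarith) measurableSet_Ioc,
      Iic_union_Ioc_eq_Iic h.le]
  have hpos : gaussianReal 0 1 (Ioc z₁ z₂) ≠ 0 := by
    rw [gaussianReal_apply 0 one_ne_zero]
    intro h0
    rw [lintegral_eq_zero_iff (measurable_gaussianPDF 0 1)] at h0
    rw [Filter.EventuallyEq, ae_restrict_iff' measurableSet_Ioc] at h0
    rw [ae_iff] at h0
    have h0' : volume (Ioc z₁ z₂) = 0 := by
      refine measure_mono_null ?_ h0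
      intro x hx
      simp only [mem_setOf_eq, Classical.not_imp, Pi.zero_apply]
      exact ⟨hx, (gaussianPDF_pos 0 one_ne_zero x).ne'⟩
    rw [Real.volume_Ioc] at h0'
    simp only [ENNReal.ofReal_eq_zero, not_le] at h0'
    linarith
  have hfin : gaussianReal 0 1 (Ioc z₁ z₂) ≠ ⊤ := measure_ne_top _ _
  rw [stdGaussCDF, stdGaussCDF, hsplit, ENNReal.toReal_add (measure_ne_top _ _) hfin]
  have := ENNReal.toReal_pos hpos hfin
  linarith

lemma cond_integral_aux {Ω : Type*} [MeasurableSpace Ω] (μ : Measure Ω) [IsProbabilityMeasure μ]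
    (S T' : Ω → ℝ) (hS : Measurable S) (hT : Measurable T') (hind : IndepFun S T' μ)
    (u : NNReal) (hu : u ≠ 0) (hSd : μ.map S = gaussianReal 0 u)
    (c : ℝ) (hc : μ {ω | T' ω = c} ≠ 0)
    (Y : Ω → ℝ) (hY : ∀ ω, Y ω = if 0 ≤ T' ω + S ω then 1 else 0) :
    ∫ ω, Y ω ∂μ[|{ω | T' ω = c}] = stdGaussCDF (c / Real.sqrt u) := by
  have hA : {ω | T' ω = c} = T' ⁻¹' {c} := rfl
  have hAm : MeasurableSet {ω | T' ω = c} := hT (measurableSet_singleton c)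
  have hμ' : μ[|{ω | T' ω = c}] (S ⁻¹' Ici (-c)) = (gaussianReal 0 u) (Ici (-c)) := by
    rw [cond_apply hAm, Set.inter_comm, hA,
      hind.measure_inter_preimage_eq_mul _ _ measurableSet_Ici (measurableSet_singleton c)]
    rw [mul_comm (μ (S ⁻¹' Ici (-c))), ← mul_assoc,
      ENNReal.inv_mul_cancel (hA ▸ hc) (measure_ne_top μ _), one_mul,
      ← Measure.map_apply hS measurableSet_Ici, hSd]
  have hae : ∀ᵐ ω ∂μ[|{ω | T' ω = c}], T' ω = c := by
    rw [ae_iff]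
    have : {ω | ¬ T' ω = c} = {ω | T' ω = c}ᶜ := rfl
    rw [this, cond_apply hAm]
    simp
  have hYae : Y =ᵐ[μ[|{ω | T' ω = c}]] (S ⁻¹' Ici (-c)).indicator (1 : Ω → ℝ) := by
    filter_upwards [hae] with ω hω
    rw [hY ω, hω]
    by_cases h : -c ≤ S ω
    · rw [Set.indicator_of_mem (by exact h), if_pos (by linarith)]
      simp
    · rw [Set.indicator_of_notMem (by exact h), if_neg (by intro h'; exact h (by linarith))]
  rw [integral_congr_ae hYae, integral_indicator_one (hS measurableSet_Ici), measureReal_def, hμ',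
    gauss_Ici u hu, neg_neg]

end Helpers

/-- the associational difference in the Gaussian SCM equals
`Φ(1/√(2+σ_Y²)) - 1/2`, which is strictly positive and strictly decreasing in `σ_Y²`. -/
theorem gaussian_scm_associational_difference {Ω : Type*} [MeasurableSpace Ω]
    (μ : Measure Ω) [IsProbabilityMeasure μ]
    (T W N NY : Ω → ℝ) (p : ℝ) (v : NNReal) (hp0 : 0 < p) (hp1 : p < 1) (hv : v ≠ 0)
    (hTm : Measurable T) (hWm : Measurable W) (hNm : Measurable N) (hNYm : Measurable NY)
    (hTval : ∀ ω, T ω = 0 ∨ T ω = 1)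
    (hT1 : (μ {ω | T ω = 1}).toReal = p)
    (hW : μ.map W = gaussianReal 0 1) (hN : μ.map N = gaussianReal 0 1)
    (hNY : μ.map NY = gaussianReal 0 v)
    (hindep : iIndepFun ![T, W, N, NY] μ)
    (Y : Ω → ℝ)
    (hY : ∀ ω, Y ω = if 0 ≤ T ω + W ω + N ω + NY ω then 1 else 0) :
    ((∫ ω, Y ω ∂μ[|{ω | T ω = 1}]) - ∫ ω, Y ω ∂μ[|{ω | T ω = 0}]
        = stdGaussCDF (1 / Real.sqrt (2 + (v : ℝ))) - 1 / 2) ∧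
      (0 < stdGaussCDF (1 / Real.sqrt (2 + (v : ℝ))) - 1 / 2) ∧
      StrictAntiOn (fun s : ℝ => stdGaussCDF (1 / Real.sqrt (2 + s)) - 1 / 2) (Ioi 0) := by
  have hmeas4 : ∀ i, Measurable (![T, W, N, NY] i) := by
    intro i
    fin_cases i <;> simpa
  -- distribution of W + N
  have hWN : IndepFun W N μ := hindep.indepFun (show (1 : Fin 4) ≠ 2 by decide)
  have hpairWN := (indepFun_iff_map_prod_eq_prod_map_map hWm.aemeasurable
    hNm.aemeasurable).mp hWN
  have mapWN : μ.map (fun ω => W ω + N ω) = gaussianReal 0 2 := by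
    calc μ.map (fun ω => W ω + N ω)
        = Measure.map (fun p : ℝ × ℝ => p.1 + p.2) (μ.map (fun ω => (W ω, N ω))) := by
          rw [Measure.map_map (by fun_prop) (hWm.prodMk hNm)]
          rfl
      _ = gaussianReal 0 2 := by
          rw [hpairWN, hW, hN, gauss_conv 1 1 one_ne_zero one_ne_zero]
          norm_num
  have hWNm : Measurable (fun ω => W ω + N ω) := hWm.add hNm
  -- independence of W + N and NY
  have hS2NY : IndepFun (fun ω => W ω + N ω) NY μ := by
    have h := hindep.indepFun_finsetSum_of_notMem hmeas4
      (s := {1, 2}) (i := 3) (by decide)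
    have h1 : (∑ j ∈ ({1, 2} : Finset (Fin 4)), ![T, W, N, NY] j) = fun ω => W ω + N ω := by
      ext ω
      rw [Finset.sum_pair (by decide : (1 : Fin 4) ≠ 2)]
      simp
    have h2 : ![T, W, N, NY] 3 = NY := rfl
    rwa [h1, h2] at h
  -- distribution of S = W + N + NY
  set S : Ω → ℝ := fun ω => W ω + N ω + NY ω with hSdef
  have hSm : Measurable S := hWNm.add hNYm
  have hpairS := (indepFun_iff_map_prod_eq_prod_map_map hWNm.aemeasurable
    hNYm.aemeasurable).mp hS2NY
  have hSd : μ.map S = gaussianReal 0 (2 + v) := by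
    calc μ.map S
        = Measure.map (fun p : ℝ × ℝ => p.1 + p.2)
            (μ.map (fun ω => (W ω + N ω, NY ω))) := by
          rw [Measure.map_map (by fun_prop) (hWNm.prodMk hNYm)]
          rfl
      _ = gaussianReal 0 (2 + v) := by
          rw [hpairS, mapWN, hNY, gauss_conv 2 v (by norm_num) hv]
  -- independence of S and T
  have hST : IndepFun S T μ := by
    have h := hindep.indepFun_finsetSum_of_notMem hmeas4
      (s := {1, 2, 3}) (i := 0) (by decide)
    have h1 : (∑ j ∈ ({1, 2, 3} : Finset (Fin 4)), ![T, W, N, NY] j) = S := by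
      ext ω
      rw [show ({1, 2, 3} : Finset (Fin 4)) = insert 1 (insert 2 {3}) from rfl,
        Finset.sum_insert (by decide), Finset.sum_insert (by decide),
        Finset.sum_singleton]
      show W ω + (N ω + NY ω) = S ω
      simp [hSdef]
      ring
    have h2 : ![T, W, N, NY] 0 = T := rfl
    rwa [h1, h2] at h
  -- nonzero conditioning events
  have huv : (2 + v : NNReal) ≠ 0 := by
    intro h
    have := congrArg (fun x : NNReal => (x : ℝ)) h
    push_cast at this
    have := v.coe_nonneg
    linarith
  have hμ1 : μ {ω | T ω = 1} ≠ 0 := by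
    intro h
    rw [h] at hT1
    simp at hT1
    linarith
  have hcompl : {ω | T ω = (0:ℝ)} = {ω | T ω = 1}ᶜ := by
    ext ω
    rcases hTval ω with h | h <;> simp [h]
  have hμ0 : μ {ω | T ω = 0} ≠ 0 := by
    rw [hcompl, prob_compl_eq_one_sub (show MeasurableSet {ω | T ω = 1} from hTm (measurableSet_singleton 1))]
    intro h
    rw [tsub_eq_zero_iff_le] at h
    have h1 : μ {ω | T ω = 1} = 1 :=
      le_antisymm prob_le_one h
    rw [h1] at hT1
    simp at hT1
    linarith
  -- rewrite Y
  have hY' : ∀ ω, Y ω = if 0 ≤ T ω + S ω then 1 else 0 := by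
    intro ω
    rw [hY ω]
    have : T ω + W ω + N ω + NY ω = T ω + S ω := by simp [hSdef]; ring
    rw [this]
  -- the two conditional expectations
  have hE1 : ∫ ω, Y ω ∂μ[|{ω | T ω = 1}] = stdGaussCDF (1 / Real.sqrt ((2 + v : NNReal))) :=
    cond_integral_aux μ S T hSm hTm hST (2 + v) huv hSd 1 hμ1 Y hY'
  have hE0 : ∫ ω, Y ω ∂μ[|{ω | T ω = 0}] = 1 / 2 := by
    rw [cond_integral_aux μ S T hSm hTm hST (2 + v) huv hSd 0 hμ0 Y hY', zero_div,
      stdGaussCDF_zero]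
  have hcoe : ((2 + v : NNReal) : ℝ) = 2 + (v : ℝ) := by push_cast; ring
  have hsqrtpos : ∀ s : ℝ, 0 ≤ s → 0 < Real.sqrt (2 + s) := by
    intro s hs
    exact Real.sqrt_pos.mpr (by linarith)
  refine ⟨?_, ?_, ?_⟩
  · rw [hE1, hE0, hcoe]
  · have h0 : (0:ℝ) < 1 / Real.sqrt (2 + (v : ℝ)) :=
      div_pos one_pos (hsqrtpos _ v.coe_nonneg)
    have := stdGaussCDF_strictMono h0
    rw [stdGaussCDF_zero] at this
    linarith
  · intro s₁ hs₁ s₂ hs₂ h12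
    simp only
    apply sub_lt_sub_right
    apply stdGaussCDF_strictMono
    have h1 : 0 < Real.sqrt (2 + s₁) := hsqrtpos _ (le_of_lt hs₁)
    have h2 : Real.sqrt (2 + s₁) < Real.sqrt (2 + s₂) :=
      Real.sqrt_lt_sqrt (by linarith [mem_Ioi.mp hs₁]) (by linarith)
    exact one_div_lt_one_div_of_lt h1 h2
end

section
/- Let Y ∈ {0,1} and f(X) ∈ {0,1} (a hard classifier) with accuracy 1−ε, i.e., P(f(X) = Y) = 1−ε, and T ~ Bernoulli(1/2) with ignorability. Then the TEB of f achieves the value 2ε when all errors are false positives in the treated group (f(X)=1, Y=0 only when T=1), showing the bound |TEB| ≤ ε/min_t P(T=t) is tight for balanced treatment. -/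
open MeasureTheory ProbabilityTheory Set

lemma int3 (ν : Measure (Fin 3)) [IsFiniteMeasure ν] (g : Fin 3 → ℝ) :
    ∫ ω, g ω ∂ν = (ν {0}).toReal * g 0 + (ν {1}).toReal * g 1 + (ν {2}).toReal * g 2 := by
  rw [integral_fintype (Integrable.of_finite)]
  simp [Fin.sum_univ_three, Measure.real]

/-- tightness of the TEB bound for balanced treatment: there is a joint
distribution with `P(T=1) = 1/2`, a hard classifier of accuracy `1-ε` whose only errors
are false positives in the treated group, achieving `TEB = 2ε`. -/
theorem teb_bound_tight (ε : ℝ) (hε0 : 0 ≤ ε) (hε2 : ε ≤ 1 / 2) :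
    ∃ (Ω : Type) (_ : MeasurableSpace Ω) (μ : Measure Ω) (_ : IsProbabilityMeasure μ)
      (T X Y : Ω → ℝ) (f : ℝ → ℝ),
      Measurable T ∧ Measurable X ∧ Measurable Y ∧ Measurable f ∧
        (∀ ω, T ω = 0 ∨ T ω = 1) ∧ (∀ ω, Y ω = 0 ∨ Y ω = 1) ∧
        (∀ x, f x = 0 ∨ f x = 1) ∧
        (μ {ω | T ω = 1}).toReal = 1 / 2 ∧
        (μ {ω | f (X ω) = Y ω}).toReal = 1 - ε ∧
        (∀ ω, f (X ω) ≠ Y ω → T ω = 1 ∧ f (X ω) = 1 ∧ Y ω = 0) ∧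
        ((∫ ω, f (X ω) ∂μ[|{ω | T ω = 1}]) - ∫ ω, Y ω ∂μ[|{ω | T ω = 1}]) -
            ((∫ ω, f (X ω) ∂μ[|{ω | T ω = 0}]) - ∫ ω, Y ω ∂μ[|{ω | T ω = 0}]) = 2 * ε := by
  classical
  have h1 : (0:ℝ) ≤ 1/2 - ε := by linarith
  set μ : Measure (Fin 3) :=
    ENNReal.ofReal ε • Measure.dirac 0 + ENNReal.ofReal (1/2 - ε) • Measure.dirac 1
      + ENNReal.ofReal (1/2) • Measure.dirac 2 with hμ
  have happ : ∀ s : Set (Fin 3), μ s =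
      ENNReal.ofReal ε * s.indicator 1 0 + ENNReal.ofReal (1/2 - ε) * s.indicator 1 1
        + ENNReal.ofReal (1/2) * s.indicator 1 2 := by
    intro s
    simp [hμ, Measure.dirac_apply]
  have hprob : IsProbabilityMeasure μ := by
    constructor
    rw [happ]
    simp only [indicator_of_mem (mem_univ _), Pi.one_apply, mul_one]
    rw [← ENNReal.ofReal_add hε0 h1, ← ENNReal.ofReal_add (by linarith) (by norm_num)]
    norm_num
  refine ⟨Fin 3, inferInstance, μ, hprob, ![1,1,0], fun ω => (ω : ℝ), ![0,1,0],
    fun x => if x < 2 then 1 else 0, ?_, ?_, ?_, ?_, ?_, ?_, ?_, ?_, ?_, ?_, ?_⟩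
  · exact measurable_of_finite _
  · exact measurable_of_finite _
  · exact measurable_of_finite _
  · exact Measurable.ite (measurableSet_Iio) measurable_const measurable_const
  · intro ω; fin_cases ω <;> simp
  · intro ω; fin_cases ω <;> simp
  · intro x; by_cases h : x < 2 <;> simp [h]
  · have : {ω : Fin 3 | (![1,1,0] : Fin 3 → ℝ) ω = 1} = {0, 1} := by
      ext ω; fin_cases ω <;> simp
    rw [this, happ]
    simp only [indicator_apply]
    norm_num [Fin.ext_iff]
    rw [← ENNReal.ofReal_add hε0 h1]
    have h : ε + (1/2 - ε) = 1/2 := by ring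
    rw [h, ENNReal.toReal_ofReal (by norm_num)]
  · have : {ω : Fin 3 | (if ((ω : Fin 3) : ℝ) < 2 then (1:ℝ) else 0) = ![0,1,0] ω}
        = {1, 2} := by
      ext ω; fin_cases ω <;> norm_num [Fin.ext_iff]
    rw [this, happ]
    simp only [indicator_apply]
    norm_num [Fin.ext_iff]
    rw [← ENNReal.ofReal_add h1 (by norm_num)]
    have h : 1/2 - ε + 1/2 = 1 - ε := by ring
    rw [h, ENNReal.toReal_ofReal (by linarith)]
  · intro ω; fin_cases ω <;> norm_num
  · have hs1 : {ω : Fin 3 | (![1,1,0] : Fin 3 → ℝ) ω = 1} = {0, 1} := by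
      ext ω; fin_cases ω <;> simp
    have hs0 : {ω : Fin 3 | (![1,1,0] : Fin 3 → ℝ) ω = 0} = {2} := by
      ext ω; fin_cases ω <;> simp
    have hμs1 : μ {0, 1} = ENNReal.ofReal (1/2) := by
      rw [happ]
      simp only [indicator_apply]
      norm_num [Fin.ext_iff]
      rw [← ENNReal.ofReal_add hε0 h1]
      norm_num
    have hμs0 : μ ({2} : Set (Fin 3)) = ENNReal.ofReal (1/2) := by
      rw [happ]; simp only [indicator_apply]; norm_num [Fin.ext_iff]
    have hhalf : (ENNReal.ofReal (1/2 : ℝ)) ≠ 0 := by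
      simp only [ne_eq, ENNReal.ofReal_eq_zero, not_le]
      norm_num
    have hc1 : IsProbabilityMeasure (μ[|({0,1} : Set (Fin 3))]) :=
      cond_isProbabilityMeasure (by rw [hμs1]; exact hhalf)
    have hc0 : IsProbabilityMeasure (μ[|({2} : Set (Fin 3))]) :=
      cond_isProbabilityMeasure (by rw [hμs0]; exact hhalf)
    have hcond : ∀ (s : Set (Fin 3)) (x : Fin 3),
        (μ[|s]) {x} = (μ s)⁻¹ * μ ({x} ∩ s) := by
      intro s x
      rw [ProbabilityTheory.cond, Measure.smul_apply,
        Measure.restrict_apply (measurableSet_singleton x)]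
      rfl
    have hinv : (ENNReal.ofReal (1/2 : ℝ))⁻¹ = 2 := by
      rw [← ENNReal.ofReal_inv_of_pos (by norm_num)]
      norm_num
    -- singleton measures of μ
    have hμ0 : μ ({0} : Set (Fin 3)) = ENNReal.ofReal ε := by
      rw [happ]; simp only [indicator_apply]; norm_num [Fin.ext_iff]
    have hμ1 : μ ({1} : Set (Fin 3)) = ENNReal.ofReal (1/2 - ε) := by
      rw [happ]; simp only [indicator_apply]; norm_num [Fin.ext_iff]
    have hμ2 : μ ({2} : Set (Fin 3)) = ENNReal.ofReal (1/2) := hμs0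
    -- conditional singleton masses
    have hc1_0 : ((μ[|({0,1} : Set (Fin 3))]) {0}).toReal = 2 * ε := by
      rw [hcond]
      have : ({0} ∩ {0,1} : Set (Fin 3)) = {0} := by ext ω; fin_cases ω <;> simp
      rw [this, hμs1, hinv, hμ0]
      rw [ENNReal.toReal_mul, ENNReal.toReal_ofReal hε0]
      norm_num
    have hc1_1 : ((μ[|({0,1} : Set (Fin 3))]) {1}).toReal = 2 * (1/2 - ε) := by
      rw [hcond]
      have : ({1} ∩ {0,1} : Set (Fin 3)) = {1} := by ext ω; fin_cases ω <;> simp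
      rw [this, hμs1, hinv, hμ1]
      rw [ENNReal.toReal_mul, ENNReal.toReal_ofReal h1]
      norm_num
    have hc1_2 : ((μ[|({0,1} : Set (Fin 3))]) {2}).toReal = 0 := by
      rw [hcond]
      have : ({2} ∩ {0,1} : Set (Fin 3)) = ∅ := by ext ω; fin_cases ω <;> simp
      rw [this]
      simp
    have hc0_0 : ((μ[|({2} : Set (Fin 3))]) {0}).toReal = 0 := by
      rw [hcond]
      have : ({0} ∩ {2} : Set (Fin 3)) = ∅ := by ext ω; fin_cases ω <;> simp
      rw [this]; simp
    have hc0_1 : ((μ[|({2} : Set (Fin 3))]) {1}).toReal = 0 := by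
      rw [hcond]
      have : ({1} ∩ {2} : Set (Fin 3)) = ∅ := by ext ω; fin_cases ω <;> simp
      rw [this]; simp
    have hc0_2 : ((μ[|({2} : Set (Fin 3))]) {2}).toReal = 1 := by
      rw [hcond]
      have : ({2} ∩ {2} : Set (Fin 3)) = {2} := by simp
      rw [this, hμs0, hinv]
      rw [ENNReal.toReal_mul, ENNReal.toReal_ofReal (by norm_num)]
      norm_num
    rw [hs1, hs0]
    rw [int3 (μ[|({0,1} : Set (Fin 3))]) (fun ω => if ((ω : Fin 3) : ℝ) < 2 then (1:ℝ) else 0),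
      int3 (μ[|({0,1} : Set (Fin 3))]) (![0,1,0]),
      int3 (μ[|({2} : Set (Fin 3))]) (fun ω => if ((ω : Fin 3) : ℝ) < 2 then (1:ℝ) else 0),
      int3 (μ[|({2} : Set (Fin 3))]) (![0,1,0])]
    rw [hc1_0, hc1_1, hc1_2, hc0_0, hc0_1, hc0_2]
    norm_num
    rfl
end
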